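/- Let p > N ≥ 2 and suppose u, v : [0,1] → ℝ are C² with u', v' > 0 on (0,1), u'(0) = 0, v continuous on [0,1], and (p-1)·u''(r)/u'(r) + (N-1)/r = v(r)^m for all r ∈ (0,1) with m > 0. Then a contradiction follows; i.e., no such pair (u,v) exists. -/

import Mathlib

open Set

/-- Case `α = p-1`: no pair `(u,v)` as below can exist. -/
theorem stmt_10 (N p m : ℝ) (hN : 2 ≤ N) (hpN : N < p) (hm : 0 < m)
    (u v : ℝ → ℝ)
    (hu : ContDiffOn ℝ 2 u (Icc 0 1)) (hv : ContDiffOn ℝ 2 v (Icc 0 1))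
    (hu' : ∀ r ∈ Ioo (0:ℝ) 1, 0 < deriv u r)
    (hv' : ∀ r ∈ Ioo (0:ℝ) 1, 0 < deriv v r)
    (hu'0 : deriv u 0 = 0)
    (hvcont : ContinuousOn v (Icc 0 1))
    (heq : ∀ r ∈ Ioo (0:ℝ) 1,
      (p - 1) * deriv (deriv u) r / deriv u r + (N - 1) / r = (v r) ^ m) :
    False := by
  have hp1 : (0:ℝ) < p - 1 := by linarith
  have hN1 : (0:ℝ) < N - 1 := by linarith
  -- bound on v ^ m
  have hfm : ContinuousOn (fun r => v r ^ m) (Icc (0:ℝ) 1) :=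
    hvcont.rpow_const (fun x _ => Or.inr hm.le)
  obtain ⟨x₀, hx₀, hx₀max⟩ := isCompact_Icc.exists_isMaxOn
    (⟨0, by norm_num⟩ : (Icc (0:ℝ) 1).Nonempty) hfm
  set M : ℝ := v x₀ ^ m with hM
  -- bound on deriv u
  have hudw : ContinuousOn (derivWithin u (Icc (0:ℝ) 1)) (Icc (0:ℝ) 1) :=
    hu.continuousOn_derivWithin (uniqueDiffOn_Icc one_pos) one_le_two
  obtain ⟨y₀, hy₀, hy₀max⟩ := isCompact_Icc.exists_isMaxOn
    (⟨0, by norm_num⟩ : (Icc (0:ℝ) 1).Nonempty) hudw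
  set B : ℝ := derivWithin u (Icc (0:ℝ) 1) y₀ with hB
  have hderiv_eq : ∀ x ∈ Ioo (0:ℝ) 1, derivWithin u (Icc (0:ℝ) 1) x = deriv u x := by
    intro x hx
    exact derivWithin_of_mem_nhds (Icc_mem_nhds hx.1 hx.2)
  have hBbound : ∀ x ∈ Ioo (0:ℝ) 1, deriv u x ≤ B := by
    intro x hx
    rw [← hderiv_eq x hx]
    exact hy₀max (Ioo_subset_Icc_self hx)
  -- second derivative existence on Ioo
  have hu2 : ContDiffOn ℝ 1 (deriv u) (Ioo (0:ℝ) 1) :=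
    (hu.mono Ioo_subset_Icc_self).deriv_of_isOpen isOpen_Ioo (by norm_num)
  set c : ℝ := (N - 1) / (p - 1) with hc
  have hcpos : 0 < c := div_pos hN1 hp1
  set g : ℝ → ℝ := fun r =>
    Real.log (deriv u r) + c * Real.log r - (M / (p - 1)) * r with hg
  have hgd : ∀ x ∈ Ioo (0:ℝ) 1,
      HasDerivAt g (deriv (deriv u) x / deriv u x + c * x⁻¹ - M / (p - 1)) x := by
    intro x hx
    have h1 : HasDerivAt (deriv u) (deriv (deriv u) x) x := by
      have := (hu2.differentiableOn one_ne_zero).differentiableAt (isOpen_Ioo.mem_nhds hx)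
      exact this.hasDerivAt
    have h2 : HasDerivAt (fun r => Real.log (deriv u r))
        (deriv (deriv u) x / deriv u x) x := h1.log (ne_of_gt (hu' x hx))
    have h3 : HasDerivAt (fun r => c * Real.log r) (c * x⁻¹) x :=
      (Real.hasDerivAt_log (ne_of_gt hx.1)).const_mul c
    have h4 : HasDerivAt (fun r => (M / (p - 1)) * r) (M / (p - 1)) x := by
      simpa using (hasDerivAt_id x).const_mul (M / (p - 1))
    exact (h2.add h3).sub h4
  have hgd0 : ∀ x ∈ Ioo (0:ℝ) 1,
      deriv (deriv u) x / deriv u x + c * x⁻¹ - M / (p - 1) ≤ 0 := by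
    intro x hx
    have he := heq x hx
    have hMx : v x ^ m ≤ M := hx₀max (Ioo_subset_Icc_self hx)
    have hux : 0 < deriv u x := hu' x hx
    have hx0 : 0 < x := hx.1
    have key : deriv (deriv u) x / deriv u x =
        (v x ^ m - (N - 1) / x) / (p - 1) := by
      field_simp at he ⊢
      nlinarith [he]
    rw [key, hc]
    have hrw : (v x ^ m - (N - 1) / x) / (p - 1) + (N - 1) / (p - 1) * x⁻¹ - M / (p - 1)
        = (v x ^ m - M) / (p - 1) := by
      field_simp
      ring
    rw [hrw]
    exact div_nonpos_of_nonpos_of_nonneg (by linarith) hp1.le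
  -- g is antitone on Ioo 0 1
  have hanti : AntitoneOn g (Ioo (0:ℝ) 1) := by
    apply antitoneOn_of_deriv_nonpos (convex_Ioo 0 1)
    · intro x hx
      exact (hgd x hx).continuousAt.continuousWithinAt
    · rw [interior_Ioo]
      intro x hx
      exact (hgd x hx).differentiableAt.differentiableWithinAt
    · rw [interior_Ioo]
      intro x hx
      rw [(hgd x hx).deriv]
      exact hgd0 x hx
  -- derive contradiction
  set K : ℝ := g (1/2) - Real.log B - |M / (p - 1)| with hK
  set ε : ℝ := min (1/4) (Real.exp (K / c - 1)) with hE
  have hε0 : 0 < ε := lt_min (by norm_num) (Real.exp_pos _)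
  have hε4 : ε ≤ 1/4 := min_le_left _ _
  have hεIoo : ε ∈ Ioo (0:ℝ) 1 := ⟨hε0, by linarith⟩
  have h12 : (1/2 : ℝ) ∈ Ioo (0:ℝ) 1 := by norm_num
  have hge : g (1/2) ≤ g ε := hanti hεIoo h12 (by linarith)
  have hlogB : Real.log (deriv u ε) ≤ Real.log B :=
    Real.log_le_log (hu' ε hεIoo) (hBbound ε hεIoo)
  have habs : -|M / (p - 1)| ≤ (M / (p - 1)) * ε := by
    have h1 : |M / (p - 1) * ε| ≤ |M / (p - 1)| := by
      rw [abs_mul, abs_of_pos hε0]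
      nlinarith [abs_nonneg (M / (p - 1))]
    linarith [neg_abs_le (M / (p - 1) * ε)]
  have hcK : K ≤ c * Real.log ε := by
    have : g ε = Real.log (deriv u ε) + c * Real.log ε - (M / (p - 1)) * ε := rfl
    rw [this] at hge
    rw [hK]
    linarith
  have hlogε : Real.log ε ≤ K / c - 1 := by
    calc Real.log ε ≤ Real.log (Real.exp (K / c - 1)) :=
          Real.log_le_log hε0 (min_le_right _ _)
    _ = K / c - 1 := Real.log_exp _
  have : K ≤ c * (K / c - 1) := hcK.trans (by
    apply mul_le_mul_of_nonneg_left hlogε hcpos.le)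
  rw [mul_sub, mul_div_cancel₀ _ (ne_of_gt hcpos), mul_one] at this
  linarith
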